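/- Theorem (variant with uniform monotonicity): a bibliometric index f satisfies uniform monotonicity, uniform citation, and uniform equivalence if and only if f is the rec-index. -/

import Mathlib

/-- A citation vector: a finite nonincreasing list of positive integers. -/
def CitVec (x : List ℕ) : Prop :=
  (∀ a ∈ x, 0 < a) ∧ List.Pairwise (· ≥ ·) x

/-- The rec-index: max over 1 ≤ i ≤ n of i·x_i (0 for the empty vector). -/
def recIdx (x : List ℕ) : ℕ :=
  ((List.range x.length).map (fun i => (i + 1) * x.getD i 0)).foldr max 0

/-- Domination: u ⊑ x. -/
def Dom (u x : List ℕ) : Prop :=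
  u.length ≤ x.length ∧ ∀ i < u.length, u.getD i 0 ≤ x.getD i 0

/-- Uniform: all entries equal. -/
def Uniform (x : List ℕ) : Prop := ∀ a ∈ x, ∀ b ∈ x, a = b

/-- x^[k]: add one citation to publication k (1-indexed; append a 1 if k = n+1). -/
def incr (x : List ℕ) (k : ℕ) : List ℕ :=
  if k ≤ x.length then x.set (k - 1) (x.getD (k - 1) 0 + 1) else x ++ [1]

/-- k is the smallest index j with x_j = x_k (taking x_{n+1} = 0);
equivalently all earlier entries are strictly larger. -/
def MinIndex (x : List ℕ) (k : ℕ) : Prop :=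
  1 ≤ k ∧ k ≤ x.length + 1 ∧ ∀ j, 1 ≤ j → j < k → x.getD (k - 1) 0 < x.getD (j - 1) 0

lemma le_foldr_max (l : List ℕ) (a : ℕ) (ha : a ∈ l) : a ≤ l.foldr max 0 := by
  induction l with
  | nil => simp at ha
  | cons b t ih =>
    rcases List.mem_cons.1 ha with rfl | h
    · simp [List.foldr_cons, le_max_iff]
    · simp only [List.foldr_cons, le_max_iff]
      exact Or.inr (ih h)

lemma foldr_max_mem (l : List ℕ) : l.foldr max 0 = 0 ∨ l.foldr max 0 ∈ l := by
  induction l with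
  | nil => simp
  | cons b t ih =>
    simp only [List.foldr_cons]
    rcases le_total b (t.foldr max 0) with h | h
    · rw [max_eq_right h]
      rcases ih with h' | h'
      · exact Or.inl h'
      · exact Or.inr (List.mem_cons_of_mem _ h')
    · rw [max_eq_left h]
      exact Or.inr (List.mem_cons_self)

lemma le_recIdx (x : List ℕ) (i : ℕ) (hi : i < x.length) :
    (i + 1) * x.getD i 0 ≤ recIdx x := by
  apply le_foldr_max
  exact List.mem_map.2 ⟨i, List.mem_range.2 hi, rfl⟩

lemma recIdx_cases (x : List ℕ) :
    recIdx x = 0 ∨ ∃ i < x.length, recIdx x = (i + 1) * x.getD i 0 := by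
  rcases foldr_max_mem ((List.range x.length).map (fun i => (i + 1) * x.getD i 0)) with h | h
  · exact Or.inl h
  · rcases List.mem_map.1 h with ⟨i, hi, he⟩
    exact Or.inr ⟨i, List.mem_range.1 hi, he.symm⟩

lemma getD_replicate (n a i : ℕ) (h : i < n) : (List.replicate n a).getD i 0 = a := by
  simp [List.getD_eq_getElem?_getD, h]

lemma recIdx_replicate (n a : ℕ) : recIdx (List.replicate n a) = n * a := by
  rcases Nat.eq_zero_or_pos n with rfl | hn
  · simp [recIdx]
  · apply le_antisymm
    · rcases recIdx_cases (List.replicate n a) with h | ⟨i, hi, he⟩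
      · simp [h]
      · rw [List.length_replicate] at hi
        rw [he, getD_replicate n a i hi]
        exact Nat.mul_le_mul_right a hi
    · have := le_recIdx (List.replicate n a) (n - 1) (by simp; omega)
      rwa [getD_replicate n a (n - 1) (by omega), Nat.sub_add_cancel hn] at this

lemma uniform_replicate (x : List ℕ) (hu : Uniform x) :
    x = List.replicate x.length (x.getD 0 0) := by
  cases x with
  | nil => simp
  | cons b t =>
    apply List.eq_replicate_iff.2
    refine ⟨rfl, fun c hc => ?_⟩
    have : (b :: t).getD 0 0 = b := rfl
    rw [this]
    exact hu c hc b (List.mem_cons_self)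

lemma sorted_getD (x : List ℕ) (hs : List.Pairwise (· ≥ ·) x) (i j : ℕ) (hij : i ≤ j)
    (hj : j < x.length) : x.getD j 0 ≤ x.getD i 0 := by
  rw [List.getD_eq_getElem x 0 hj, List.getD_eq_getElem x 0 (lt_of_le_of_lt hij hj)]
  exact List.Pairwise.rel_get_of_le hs hij

lemma dom_replicate (x : List ℕ) (hs : List.Pairwise (· ≥ ·) x) (i : ℕ) (hi : i < x.length) :
    Dom (List.replicate (i + 1) (x.getD i 0)) x := by
  constructor
  · simpa using hi
  · intro j hj
    rw [List.length_replicate] at hj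
    rw [getD_replicate _ _ _ hj]
    exact sorted_getD x hs j i (by omega) hi

lemma citvec_replicate (n a : ℕ) (ha : 0 < a) : CitVec (List.replicate n a) := by
  constructor
  · intro b hb; rw [List.eq_of_mem_replicate hb]; exact ha
  · exact List.pairwise_replicate.2 (by simp)

lemma uniform_replicate' (n a : ℕ) : Uniform (List.replicate n a) := by
  intro b hb c hc
  rw [List.eq_of_mem_replicate hb, List.eq_of_mem_replicate hc]

lemma getD_mem (x : List ℕ) (i : ℕ) (hi : i < x.length) : x.getD i 0 ∈ x := by
  rw [List.getD_eq_getElem x 0 hi]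
  exact List.getElem_mem hi

lemma recIdx_uniform (x : List ℕ) (hu : Uniform x) :
    recIdx x = x.length * x.getD 0 0 := by
  conv_lhs => rw [uniform_replicate x hu]
  exact recIdx_replicate _ _

lemma sum_uniform (x : List ℕ) (hu : Uniform x) :
    x.sum = x.length * x.getD 0 0 := by
  conv_lhs => rw [uniform_replicate x hu]
  simp [List.sum_replicate, smul_eq_mul]

theorem rec_characterisation_UM (f : List ℕ → ℝ)
    (hnonneg : ∀ x, CitVec x → 0 ≤ f x) (hbase : f [] = 0) :
    ((∀ x y, CitVec x → CitVec y → Uniform x → Dom x y → f x ≤ f y) ∧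
     (∀ x, CitVec x → Uniform x → f x = x.sum) ∧
     (∀ x, CitVec x → ∃ u, CitVec u ∧ Uniform u ∧ Dom u x ∧ f x = f u)) ↔
    (∀ x, CitVec x → f x = recIdx x) := by
  constructor
  · rintro ⟨hUM, hUC, hUE⟩ x hx
    apply le_antisymm
    · -- f x ≤ recIdx x
      obtain ⟨u, hu, huu, hdom, hfx⟩ := hUE x hx
      rw [hfx, hUC u hu huu]
      rw [sum_uniform u huu]
      rcases Nat.eq_zero_or_pos u.length with hl | hl
      · simp [hl]
      · set m := u.length with hm
        have h1 : u.getD (m - 1) 0 = u.getD 0 0 := by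
          conv_lhs => rw [uniform_replicate u huu]
          rw [getD_replicate _ _ _ (by omega)]
        have h2 : u.getD (m - 1) 0 ≤ x.getD (m - 1) 0 := hdom.2 (m - 1) (by omega)
        have h3 : m * u.getD 0 0 ≤ recIdx x := by
          calc m * u.getD 0 0 ≤ m * x.getD (m - 1) 0 := by
                apply Nat.mul_le_mul_left
                omega
            _ = ((m - 1) + 1) * x.getD (m - 1) 0 := by congr 1; omega
            _ ≤ recIdx x := le_recIdx x (m - 1) (by have := hdom.1; omega)
        exact_mod_cast h3
    · -- recIdx x ≤ f x
      rcases recIdx_cases x with h | ⟨i, hi, he⟩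
      · rw [h]
        simpa using hnonneg x hx
      · have hv : 0 < x.getD i 0 := hx.1 _ (getD_mem x i hi)
        have hcv := citvec_replicate (i + 1) (x.getD i 0) hv
        have hle := hUM _ x hcv hx (uniform_replicate' _ _) (dom_replicate x hx.2 i hi)
        have hfu : f (List.replicate (i + 1) (x.getD i 0)) = ((i + 1) * x.getD i 0 : ℕ) := by
          rw [hUC _ hcv (uniform_replicate' _ _)]
          push_cast [List.sum_replicate, smul_eq_mul]
          ring
        rw [he, ← hfu]
        exact_mod_cast hle
  · intro h
    refine ⟨?_, ?_, ?_⟩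
    · intro x y hx hy hux hdom
      rw [h x hx, h y hy]
      have : recIdx x ≤ recIdx y := by
        rw [recIdx_uniform x hux]
        rcases Nat.eq_zero_or_pos x.length with hl | hl
        · simp [hl]
        · set m := x.length with hm
          have h1 : x.getD (m - 1) 0 = x.getD 0 0 := by
            conv_lhs => rw [uniform_replicate x hux]
            rw [getD_replicate _ _ _ (by omega)]
          have h2 : x.getD (m - 1) 0 ≤ y.getD (m - 1) 0 := hdom.2 (m - 1) (by omega)
          calc m * x.getD 0 0 ≤ m * y.getD (m - 1) 0 := by
                apply Nat.mul_le_mul_left; omega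
            _ = ((m - 1) + 1) * y.getD (m - 1) 0 := by congr 1; omega
            _ ≤ recIdx y := le_recIdx y (m - 1) (by have := hdom.1; omega)
      exact_mod_cast this
    · intro x hx hux
      rw [h x hx]
      have : recIdx x = x.sum := by rw [recIdx_uniform x hux, sum_uniform x hux]
      exact_mod_cast this
    · intro x hx
      rcases recIdx_cases x with h0 | ⟨i, hi, he⟩
      · refine ⟨[], ⟨by simp, List.Pairwise.nil⟩, by simp [Uniform], ⟨Nat.zero_le _, by simp⟩, ?_⟩
        rw [h x hx, h0, hbase]
        simp
      · have hv : 0 < x.getD i 0 := hx.1 _ (getD_mem x i hi)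
        have hcv := citvec_replicate (i + 1) (x.getD i 0) hv
        refine ⟨_, hcv, uniform_replicate' _ _, dom_replicate x hx.2 i hi, ?_⟩
        rw [h x hx, h _ hcv, he, recIdx_replicate]
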